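/- If structure constants are defined by c_{αβ}^γ = Σ_i ψ_{iα}ψ_{iβ}ψ_{iγ}/ψ_{i1} with ψ_{i1} ≠ 0 and Σ_i ψ_{iα}ψ_{iβ} = δ_{αβ}, then the multiplication with these structure constants is associative: Σ_k c_{αβ}^k c_{kγ}^δ = Σ_k c_{βγ}^k c_{αk}^δ, and c_{1β}^γ = δ_{βγ} (so e_1 is a unit). -/

import Mathlib

open Finset

/-- Let `ψ ∈ Mat_n(ℝ)` have orthonormal columns (`Σ_i ψ_{iα} ψ_{iβ} = δ_{αβ}`)
and nonvanishing first-column entries `ψ_{i1} ≠ 0` (the index `1` is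
`0 : Fin n`).  Then the structure constants
`c_{αβ}^γ = Σ_i ψ_{iα} ψ_{iβ} ψ_{iγ} / ψ_{i1}` define an associative
multiplication, `Σ_k c_{αβ}^k c_{kγ}^δ = Σ_k c_{βγ}^k c_{αk}^δ`, with unit
`e_1`: `c_{1β}^γ = δ_{βγ}`. -/
theorem structure_constants_associative_with_unit
    (n : ℕ) [NeZero n] (ψ : Matrix (Fin n) (Fin n) ℝ)
    (horth : ∀ α β, ∑ i, ψ i α * ψ i β = if α = β then (1:ℝ) else 0)
    (hne : ∀ i, ψ i 0 ≠ 0)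
    (c : Fin n → Fin n → Fin n → ℝ)
    (hc : ∀ α β γ, c α β γ = ∑ i, ψ i α * ψ i β * ψ i γ / ψ i 0) :
    (∀ α β γ δ, ∑ k, c α β k * c k γ δ = ∑ k, c β γ k * c α k δ) ∧
    (∀ β γ, c 0 β γ = if β = γ then 1 else 0) := by
  -- rows are orthonormal as well
  have h1 : ψ.transpose * ψ = 1 := by
    ext α β
    simp [Matrix.mul_apply, Matrix.transpose_apply, Matrix.one_apply, horth]
  have h2 : ψ * ψ.transpose = 1 := mul_eq_one_comm.mp h1
  have hrow : ∀ i j, ∑ k, ψ i k * ψ j k = if i = j then (1:ℝ) else 0 := by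
    intro i j
    have := congrFun (congrFun h2 i) j
    simpa [Matrix.mul_apply, Matrix.transpose_apply, Matrix.one_apply] using this
  -- the key collapse
  have key : ∀ α β γ δ : Fin n,
      ∑ k, (∑ i, ψ i α * ψ i β * ψ i k / ψ i 0) * (∑ j, ψ j γ * ψ j δ * ψ j k / ψ j 0)
        = ∑ i, ψ i α * ψ i β * ψ i γ * ψ i δ / (ψ i 0)^2 := by
    intro α β γ δ
    have expand : ∑ k, (∑ i, ψ i α * ψ i β * ψ i k / ψ i 0) * (∑ j, ψ j γ * ψ j δ * ψ j k / ψ j 0)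
        = ∑ k, ∑ i, ∑ j, (ψ i α * ψ i β * ψ i k / ψ i 0) * (ψ j γ * ψ j δ * ψ j k / ψ j 0) := by
      refine Finset.sum_congr rfl fun k _ => ?_
      rw [Finset.sum_mul]
      exact Finset.sum_congr rfl fun i _ => Finset.mul_sum _ _ _
    rw [expand, Finset.sum_comm]
    have step : ∀ i : Fin n,
        ∑ j, ∑ k, (ψ i α * ψ i β * ψ i k / ψ i 0) * (ψ j γ * ψ j δ * ψ j k / ψ j 0)
          = ψ i α * ψ i β * ψ i γ * ψ i δ / (ψ i 0)^2 := by
      intro i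
      have inner : ∀ j : Fin n,
          ∑ k, (ψ i α * ψ i β * ψ i k / ψ i 0) * (ψ j γ * ψ j δ * ψ j k / ψ j 0)
            = (ψ i α * ψ i β / ψ i 0) * (ψ j γ * ψ j δ / ψ j 0)
                * (if i = j then (1:ℝ) else 0) := by
        intro j
        rw [← hrow i j, Finset.mul_sum]
        apply Finset.sum_congr rfl
        intro k _
        ring
      simp only [inner]
      rw [Finset.sum_eq_single i]
      · have h := hne i
        field_simp
        simp
      · intro j _ hji
        simp [Ne.symm hji]
      · intro h
        exact absurd (Finset.mem_univ i) h
    calc ∑ i, ∑ k, ∑ j, (ψ i α * ψ i β * ψ i k / ψ i 0) * (ψ j γ * ψ j δ * ψ j k / ψ j 0)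
        = ∑ i, ∑ j, ∑ k, (ψ i α * ψ i β * ψ i k / ψ i 0) * (ψ j γ * ψ j δ * ψ j k / ψ j 0) :=
          Finset.sum_congr rfl fun i _ => Finset.sum_comm
      _ = ∑ i, ψ i α * ψ i β * ψ i γ * ψ i δ / (ψ i 0)^2 :=
          Finset.sum_congr rfl fun i _ => step i
  constructor
  · intro α β γ δ
    have L : ∑ k, c α β k * c k γ δ = ∑ i, ψ i α * ψ i β * ψ i γ * ψ i δ / (ψ i 0)^2 := by
      rw [← key α β γ δ]
      apply Finset.sum_congr rfl
      intro k _
      rw [hc, hc]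
      congr 1
      apply Finset.sum_congr rfl
      intro j _
      ring
    have R : ∑ k, c β γ k * c α k δ = ∑ i, ψ i β * ψ i γ * ψ i α * ψ i δ / (ψ i 0)^2 := by
      rw [← key β γ α δ]
      apply Finset.sum_congr rfl
      intro k _
      rw [hc, hc]
      congr 1
      apply Finset.sum_congr rfl
      intro j _
      ring
    rw [L, R]
    apply Finset.sum_congr rfl
    intro i _
    ring
  · intro β γ
    rw [hc, ← horth β γ]
    apply Finset.sum_congr rfl
    intro i _
    have h := hne i
    field_simp
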